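/- Let Γ be a finite directed graph, let p be a nonempty directed circuit in Γ and let d be a directed path starting at the basepoint of p such that p and d share no nontrivial common prefix. Then L_{p,d} = {(vp^r d, vp^s d) : r,s ≥ 0, v a suffix of p} ∪ {(q,q) : q a suffix of d} is the smallest closed inverse subsemigroup of S(Γ) containing the element (d, pd): every closed inverse subsemigroup of S(Γ) that contains (d,pd) contains L_{p,d}. -/

import Mathlib

/-- A (finite) directed graph: vertices, edges, and source/target maps. -/
structure DGraph where
  V : Type
  E : Type
  src : E → V
  tgt : E → V

namespace DGraph

/-- The vertex reached after traversing a list of edges from a vertex. -/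
def walkEnd (G : DGraph) : G.V → List G.E → G.V
  | v, [] => v
  | _, e :: l => walkEnd G (G.tgt e) l

/-- The list of edges forms a directed walk starting at the given vertex. -/
def IsWalk (G : DGraph) : G.V → List G.E → Prop
  | _, [] => True
  | v, e :: l => G.src e = v ∧ IsWalk G (G.tgt e) l

variable (G : DGraph)

@[simp] theorem walkEnd_nil (v : G.V) : G.walkEnd v [] = v := rfl
@[simp] theorem walkEnd_cons (v : G.V) (e : G.E) (l : List G.E) :
    G.walkEnd v (e :: l) = G.walkEnd (G.tgt e) l := rfl
@[simp] theorem isWalk_nil (v : G.V) : G.IsWalk v [] := trivial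
@[simp] theorem isWalk_cons (v : G.V) (e : G.E) (l : List G.E) :
    G.IsWalk v (e :: l) ↔ G.src e = v ∧ G.IsWalk (G.tgt e) l := Iff.rfl

theorem isWalk_append (v : G.V) (l1 l2 : List G.E) :
    G.IsWalk v (l1 ++ l2) ↔ G.IsWalk v l1 ∧ G.IsWalk (G.walkEnd v l1) l2 := by
  induction l1 generalizing v with
  | nil => simp [IsWalk, walkEnd]
  | cons e l ih => simp [IsWalk, walkEnd, ih, and_assoc]

/-- A directed path in `G`: an initial vertex together with a compatible
list of edges, traversed in order (empty paths are allowed). -/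
structure DPath (G : DGraph) where
  first : G.V
  edges : List G.E
  wf : G.IsWalk first edges

namespace DPath

variable {G}

/-- The terminal vertex of a directed path. -/
def last (p : G.DPath) : G.V := G.walkEnd p.first p.edges

/-- The list of vertices lying on a directed path. -/
def vertexList (p : G.DPath) : List G.V := p.first :: p.edges.map G.tgt

/-- `q` is a suffix (terminal segment) of `p`: `p = l ⬝ q` for some edge list `l`. -/
def IsSuffixOf (q p : G.DPath) : Prop :=
  ∃ l : List G.E, p.edges = l ++ q.edges ∧ q.first = G.walkEnd p.first l

end DPath

theorem isWalk_chopAppend {u v w : G.DPath} (hs : v.IsSuffixOf u) (hvw : v.first = w.first) :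
    G.IsWalk u.first (u.edges.take (u.edges.length - v.edges.length) ++ w.edges) := by
  obtain ⟨l, hl, hfst⟩ := hs
  rw [hl]
  have hlen : (l ++ v.edges).length - v.edges.length = l.length := by simp
  rw [hlen, List.take_left, G.isWalk_append]
  have hu := u.wf
  rw [hl, G.isWalk_append] at hu
  refine ⟨hu.1, ?_⟩
  rw [← hfst, hvw]
  exact w.wf

theorem isWalk_concat {p q : G.DPath} (h : q.first = p.last) :
    G.IsWalk p.first (p.edges ++ q.edges) := by
  rw [G.isWalk_append]
  refine ⟨p.wf, ?_⟩
  show G.IsWalk p.last q.edges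
  rw [← h]
  exact q.wf

/-- Concatenation of composable directed paths. -/
def concatPath (p q : G.DPath) (h : q.first = p.last) : G.DPath :=
  ⟨p.first, p.edges ++ q.edges, G.isWalk_concat h⟩

theorem isWalk_replicate (a : G.E) (h : G.tgt a = G.src a) (m : ℕ) :
    G.IsWalk (G.src a) (List.replicate m a) := by
  induction m with
  | zero => trivial
  | succ n ih => rw [List.replicate_succ, G.isWalk_cons]; exact ⟨rfl, by rw [h]; exact ih⟩

/-- The path traversing a loop `a` exactly `m` times. -/
def loopPow (a : G.E) (h : G.tgt a = G.src a) (m : ℕ) : G.DPath :=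
  ⟨G.src a, List.replicate m a, G.isWalk_replicate a h m⟩

/-- `p` is a nonempty directed circuit. -/
def IsCircuit (p : G.DPath) : Prop := p.edges ≠ [] ∧ p.last = p.first

/-- `p` and `d` share no nontrivial common prefix (initial segment). -/
def NoCommonPrefix (p d : G.DPath) : Prop :=
  ∀ l : List G.E, l ≠ [] → l <+: p.edges → ¬ l <+: d.edges

end DGraph

/-- The underlying set of the graph inverse semigroup `S(Γ)`: pairs of directed
paths with the same initial vertex, together with a zero element. -/
inductive GIS (G : DGraph) where
  | zero : GIS G
  | pair (a b : G.DPath) (h : a.first = b.first) : GIS G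

namespace GIS

open scoped Classical in
/-- The multiplication of the graph inverse semigroup:
`(t,u)(v,w) = (t,pw)` if `u = pv`, `(pt,w)` if `v = pu`, and `0` otherwise. -/
noncomputable def mul {G : DGraph} : GIS G → GIS G → GIS G
  | .zero, _ => .zero
  | .pair _ _ _, .zero => .zero
  | .pair t u h1, .pair v w h2 =>
    if hs : v.IsSuffixOf u then
      .pair t ⟨t.first, u.edges.take (u.edges.length - v.edges.length) ++ w.edges,
        by rw [h1]; exact G.isWalk_chopAppend hs h2⟩ rfl
    else if hs' : u.IsSuffixOf v then
      .pair ⟨v.first, v.edges.take (v.edges.length - u.edges.length) ++ t.edges,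
        G.isWalk_chopAppend hs' h1.symm⟩ w h2
    else .zero

noncomputable instance {G : DGraph} : Mul (GIS G) := ⟨GIS.mul⟩

/-- The inverse: `(v,w)⁻¹ = (w,v)` and `0⁻¹ = 0`. -/
def inv {G : DGraph} : GIS G → GIS G
  | .zero => .zero
  | .pair a b h => .pair b a h.symm

/-- The natural partial order: `x ≤ y` iff `x = e * y` for some idempotent `e`. -/
def le {G : DGraph} (x y : GIS G) : Prop := ∃ e : GIS G, e * e = e ∧ x = e * y

end GIS

/-- `L` is a closed inverse subsemigroup of `S(Γ)`: a nonempty subset closed under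
multiplication, inverses, and upward closed in the natural partial order. -/
def IsCISS (G : DGraph) (L : Set (GIS G)) : Prop :=
  L.Nonempty ∧ (∀ a ∈ L, ∀ b ∈ L, a * b ∈ L) ∧ (∀ a ∈ L, a.inv ∈ L) ∧
    (∀ a ∈ L, ∀ s : GIS G, GIS.le a s → s ∈ L)

/-- The closed inverse subsemigroup `↑{(u,u)}` of (finite) chain type:
all `(q,q)` with `q` a suffix of `u`. -/
def chainSet (G : DGraph) (u : G.DPath) : Set (GIS G) :=
  {x | ∃ q : G.DPath, q.IsSuffixOf u ∧ x = GIS.pair q q rfl}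

/-- The edge list of the `r`-th power of the path `p`. -/
def powEdges {G : DGraph} (p : G.DPath) (r : ℕ) : List G.E :=
  (List.replicate r p.edges).flatten

/-- The closed inverse subsemigroup of cycle type
`L_{p,d} = {(v p^r d, v p^s d) : r,s ≥ 0, v a suffix of p} ∪ {(q,q) : q a suffix of d}`. -/
def cycleSet (G : DGraph) (p d : G.DPath) : Set (GIS G) :=
  {x | (∃ (r s : ℕ) (v a b : G.DPath) (h : a.first = b.first),
          v.IsSuffixOf p ∧ x = GIS.pair a b h ∧
          a.first = v.first ∧ a.edges = v.edges ++ powEdges p r ++ d.edges ∧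
          b.first = v.first ∧ b.edges = v.edges ++ powEdges p s ++ d.edges) ∨
       (∃ q : G.DPath, q.IsSuffixOf d ∧ x = GIS.pair q q rfl)}

/-- `L` is a chain of idempotents: all elements are idempotent and any two are
comparable in the natural partial order. -/
def IsChainOfIdem (G : DGraph) (L : Set (GIS G)) : Prop :=
  (∀ x ∈ L, x * x = x) ∧ ∀ x ∈ L, ∀ y ∈ L, GIS.le x y ∨ GIS.le y x

/-- The set of right cosets `↑(Lt)` (for `t` with `t t⁻¹ ∈ L`) of a closed inverse
subsemigroup `L`. -/
def cosets (G : DGraph) (L : Set (GIS G)) : Set (Set (GIS G)) :=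
  {C | ∃ t : GIS G, t * t.inv ∈ L ∧ C = {s | ∃ x ∈ L, GIS.le (x * t) s}}

/-- `H` and `K` are conjugate: for some `s`, `s⁻¹Hs ⊆ K` and `sKs⁻¹ ⊆ H`. -/
def Conjugate (G : DGraph) (H K : Set (GIS G)) : Prop :=
  ∃ s : GIS G, (∀ h ∈ H, s.inv * h * s ∈ K) ∧ (∀ k ∈ K, s * k * s.inv ∈ H)

/-- The set of directed paths with initial vertex `v` whose first edge (if any)
is not an edge of `w`. -/
def Npaths (G : DGraph) (v : G.V) (w : G.DPath) : Set G.DPath :=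
  {t | t.first = v ∧ ∀ e, t.edges.head? = some e → e ∉ w.edges}

/-! ### Auxiliary infrastructure -/

section Aux

variable {G : DGraph}

theorem walkEnd_append' (v : G.V) (l1 l2 : List G.E) :
    G.walkEnd v (l1 ++ l2) = G.walkEnd (G.walkEnd v l1) l2 := by
  induction l1 generalizing v with
  | nil => rfl
  | cons e l ih => simp [ih]

theorem DPath.ext' {a b : G.DPath} (h1 : a.first = b.first) (h2 : a.edges = b.edges) : a = b := by
  cases a; cases b; simp_all

theorem powE_zero (p : G.DPath) : powEdges p 0 = [] := rfl

theorem powE_succ (p : G.DPath) (k : ℕ) :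
    powEdges p (k + 1) = p.edges ++ powEdges p k := by
  simp [powEdges, List.replicate_succ]

theorem powE_one (p : G.DPath) : powEdges p 1 = p.edges := by
  simp [powE_succ, powE_zero]

theorem powE_add (p : G.DPath) (a b : ℕ) :
    powEdges p (a + b) = powEdges p a ++ powEdges p b := by
  induction a with
  | zero => simp [powE_zero]
  | succ n ih => rw [Nat.succ_add, powE_succ, powE_succ, ih, List.append_assoc]

theorem powE_succ_right (p : G.DPath) (k : ℕ) :
    powEdges p (k + 1) = powEdges p k ++ p.edges := by
  rw [powE_add, powE_one]

theorem length_powE (p : G.DPath) (k : ℕ) :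
    (powEdges p k).length = k * p.edges.length := by
  induction k with
  | zero => simp [powE_zero]
  | succ n ih => rw [powE_succ, List.length_append, ih, Nat.succ_mul]; omega

theorem walkEnd_powE {p : G.DPath} (hp2 : p.last = p.first) (k : ℕ) :
    G.walkEnd p.first (powEdges p k) = p.first := by
  induction k with
  | zero => rfl
  | succ n ih =>
    rw [powE_succ, walkEnd_append', show G.walkEnd p.first p.edges = p.first from hp2]
    exact ih

theorem isWalk_powE {p : G.DPath} (hp2 : p.last = p.first) (k : ℕ) :
    G.IsWalk p.first (powEdges p k) := by
  induction k with
  | zero => exact trivial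
  | succ n ih =>
    rw [powE_succ, G.isWalk_append]
    exact ⟨p.wf, by rw [show G.walkEnd p.first p.edges = p.first from hp2]; exact ih⟩

theorem take_of_app {u l c : List G.E} (h : u = l ++ c) :
    u.take (u.length - c.length) = l := by
  subst h; simp [List.take_left]

theorem drop_ge' {a b : List G.E} {n : ℕ} (h : a.length ≤ n) :
    (a ++ b).drop n = b.drop (n - a.length) := by
  rw [List.drop_append, List.drop_eq_nil_of_le h, List.nil_append]

theorem drop_powE {p : G.DPath} (c S : ℕ) (h : c ≤ S) (x : List G.E) :
    (powEdges p S ++ x).drop (c * p.edges.length) = powEdges p (S - c) ++ x := by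
  induction c generalizing S with
  | zero => simp
  | succ n ih =>
    obtain ⟨S', rfl⟩ : ∃ S', S = S' + 1 := ⟨S - 1, by omega⟩
    rw [powE_succ, List.append_assoc, Nat.succ_mul, Nat.add_comm,
      ← List.drop_drop, drop_ge' (le_refl _), Nat.sub_self, List.drop_zero,
      ih S' (by omega)]
    congr 2
    omega

namespace DGraph.DPath

theorem suffix_refl (q : G.DPath) : q.IsSuffixOf q := ⟨[], rfl, rfl⟩

theorem IsSuffixOf.trans' {q u w : G.DPath} (h1 : q.IsSuffixOf u) (h2 : u.IsSuffixOf w) :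
    q.IsSuffixOf w := by
  obtain ⟨l1, hl1, hv1⟩ := h1
  obtain ⟨l2, hl2, hv2⟩ := h2
  exact ⟨l2 ++ l1, by rw [hl2, hl1, List.append_assoc],
    by rw [hv1, hv2, walkEnd_append']⟩

theorem suffix_last {q u : G.DPath} (h : q.IsSuffixOf u) : q.last = u.last := by
  obtain ⟨l, hl, hv⟩ := h
  show G.walkEnd q.first q.edges = G.walkEnd u.first u.edges
  rw [hl, walkEnd_append', ← hv]

theorem suffix_tot {q1 q2 u : G.DPath} (h1 : q1.IsSuffixOf u) (h2 : q2.IsSuffixOf u) :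
    q1.IsSuffixOf q2 ∨ q2.IsSuffixOf q1 := by
  obtain ⟨l1, hl1, hv1⟩ := h1
  obtain ⟨l2, hl2, hv2⟩ := h2
  have he : l1 ++ q1.edges = l2 ++ q2.edges := by rw [← hl1, ← hl2]
  rcases List.append_eq_append_iff.mp he with ⟨m, hm1, hm2⟩ | ⟨m, hm1, hm2⟩
  · exact Or.inr ⟨m, hm2, by rw [hv2, hm1, walkEnd_append', ← hv1]⟩
  · exact Or.inl ⟨m, hm2, by rw [hv1, hm1, walkEnd_append', ← hv2]⟩

theorem first_of_cons {X : G.DPath} {e : G.E} {l : List G.E} (h : X.edges = e :: l) :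
    X.first = G.src e := by
  have := X.wf
  rw [h, G.isWalk_cons] at this
  exact this.1.symm

end DGraph.DPath

/-- Construct an `IsSuffixOf` witness from an edges equation, using walk structure
for the vertex condition (except in the empty case). -/
theorem isSuffixOf_of_edges {u q : G.DPath} (l : List G.E) (h : u.edges = l ++ q.edges)
    (hne : q.edges = [] → q.first = u.last) : q.IsSuffixOf u := by
  refine ⟨l, h, ?_⟩
  match hq : q.edges with
  | [] =>
    have hl : u.edges = l := by rw [h, hq, List.append_nil]
    rw [hne hq]
    show G.walkEnd u.first u.edges = _
    rw [hl]
  | e :: tl =>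
    have := u.wf
    rw [h, hq, G.isWalk_append, G.isWalk_cons] at this
    rw [DGraph.DPath.first_of_cons hq, this.2.1]

namespace GIS

theorem pair_congr {a b a' b' : G.DPath} {h : a.first = b.first} {h' : a'.first = b'.first}
    (ha : a = a') (hb : b = b') : GIS.pair a b h = GIS.pair a' b' h' := by
  subst ha; subst hb; rfl

theorem pair_inj {a b a' b' : G.DPath} {h : a.first = b.first} {h' : a'.first = b'.first}
    (he : GIS.pair a b h = GIS.pair a' b' h') : a = a' ∧ b = b' := by
  injection he with h1 h2
  exact ⟨h1, h2⟩

theorem mul_def' (x y : GIS G) : x * y = GIS.mul x y := rfl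

theorem zero_mul' (x : GIS G) : (GIS.zero : GIS G) * x = GIS.zero := rfl

theorem mul_zero' (x : GIS G) : x * (GIS.zero : GIS G) = GIS.zero := by
  cases x <;> rfl

theorem mul_eq₁ {t u v w : G.DPath} {h1 : t.first = u.first} {h2 : v.first = w.first}
    (hs : v.IsSuffixOf u) :
    ∃ (b : G.DPath) (hb : t.first = b.first),
      GIS.pair t u h1 * GIS.pair v w h2 = GIS.pair t b hb ∧ b.first = t.first ∧
        b.edges = u.edges.take (u.edges.length - v.edges.length) ++ w.edges := by
  have he : GIS.pair t u h1 * GIS.pair v w h2 =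
      GIS.pair t ⟨t.first, u.edges.take (u.edges.length - v.edges.length) ++ w.edges,
        by rw [h1]; exact G.isWalk_chopAppend hs h2⟩ rfl := by
    rw [mul_def']; simp only [GIS.mul]; rw [dif_pos hs]
  refine ⟨_, ?_, he, ?_, ?_⟩ <;> rfl

theorem mul_eq₂ {t u v w : G.DPath} {h1 : t.first = u.first} {h2 : v.first = w.first}
    (hs : ¬ v.IsSuffixOf u) (hs' : u.IsSuffixOf v) :
    ∃ (a : G.DPath) (ha : a.first = w.first),
      GIS.pair t u h1 * GIS.pair v w h2 = GIS.pair a w ha ∧ a.first = v.first ∧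
        a.edges = v.edges.take (v.edges.length - u.edges.length) ++ t.edges := by
  have he : GIS.pair t u h1 * GIS.pair v w h2 =
      GIS.pair ⟨v.first, v.edges.take (v.edges.length - u.edges.length) ++ t.edges,
        G.isWalk_chopAppend hs' h1.symm⟩ w h2 := by
    rw [mul_def']; simp only [GIS.mul]; rw [dif_neg hs, dif_pos hs']
  refine ⟨_, ?_, he, ?_, ?_⟩
  · exact h2
  · rfl
  · rfl

theorem mul_eq₃ {t u v w : G.DPath} {h1 : t.first = u.first} {h2 : v.first = w.first}
    (hs : ¬ v.IsSuffixOf u) (hs' : ¬ u.IsSuffixOf v) :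
    GIS.pair t u h1 * GIS.pair v w h2 = GIS.zero := by
  rw [mul_def']; simp only [GIS.mul]; rw [dif_neg hs, dif_neg hs']

theorem diag_idem (a : G.DPath) : (GIS.pair a a rfl) * (GIS.pair a a rfl) = GIS.pair a a rfl := by
  obtain ⟨b, hb, he, hb1, hb2⟩ := mul_eq₁ (t := a) (u := a) (w := a)
    (h1 := rfl) (h2 := rfl) (a.suffix_refl)
  rw [he]
  exact pair_congr rfl (DPath.ext' hb1 (by rw [hb2]; simp))

theorem idem_eq {c f : G.DPath} {hcf : c.first = f.first}
    (h : GIS.pair c f hcf * GIS.pair c f hcf = GIS.pair c f hcf) : c = f := by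
  by_cases hs : c.IsSuffixOf f
  · obtain ⟨b, hb, he, hb1, hb2⟩ := mul_eq₁ (t := c) (u := f) (v := c) (w := f)
      (h1 := hcf) (h2 := hcf) hs
    rw [he] at h
    obtain ⟨-, h2⟩ := pair_inj h
    obtain ⟨l, hl, -⟩ := hs
    rw [take_of_app hl] at hb2
    have : l = [] := by
      have := congrArg List.length (h2 ▸ hb2 : f.edges = l ++ f.edges)
      simpa using this
    subst this
    rw [List.nil_append] at hl
    exact DPath.ext' hcf hl.symm
  · by_cases hs' : f.IsSuffixOf c
    · obtain ⟨a, ha, he, ha1, ha2⟩ := mul_eq₂ (t := c) (u := f) (v := c) (w := f)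
        (h1 := hcf) (h2 := hcf) hs hs'
      rw [he] at h
      obtain ⟨h2, -⟩ := pair_inj h
      obtain ⟨l, hl, -⟩ := hs'
      rw [take_of_app hl] at ha2
      have hce : c.edges = l ++ c.edges := h2 ▸ ha2
      have : l = [] := by
        have := congrArg List.length hce
        simpa using this
      subst this
      rw [List.nil_append] at hl
      exact DPath.ext' hcf hl
    · rw [mul_eq₃ hs hs'] at h
      exact absurd h (by simp)

theorem le_intro {a b c f : G.DPath} (h2 : a.first = b.first) (h : c.first = f.first)
    (l : List G.E) (ha : a.edges = l ++ c.edges) (hbe : b.edges = l ++ f.edges)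
    (hvc : c.first = G.walkEnd a.first l) :
    GIS.le (GIS.pair a b h2) (GIS.pair c f h) := by
  refine ⟨GIS.pair a a rfl, diag_idem a, ?_⟩
  obtain ⟨bb, hbb, he, hbb1, hbb2⟩ := mul_eq₁ (t := a) (u := a) (v := c) (w := f)
    (h1 := rfl) (h2 := h) ⟨l, ha, hvc⟩
  rw [he]
  refine pair_congr rfl (DPath.ext' (h2.symm.trans hbb1.symm) ?_)
  rw [hbe, hbb2, take_of_app ha]

end GIS

section Cyc

variable {G : DGraph} {p d : G.DPath}

theorem mem_cyc {x : GIS G} {a b v : G.DPath} {h : a.first = b.first}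
    (hx : x = GIS.pair a b h) (hv : v.IsSuffixOf p) (r s : ℕ)
    (ha1 : a.first = v.first) (ha2 : a.edges = v.edges ++ (powEdges p r ++ d.edges))
    (hb1 : b.first = v.first) (hb2 : b.edges = v.edges ++ (powEdges p s ++ d.edges)) :
    x ∈ cycleSet G p d :=
  Or.inl ⟨r, s, v, a, b, h, hv, hx, ha1, by rw [ha2, List.append_assoc], hb1,
    by rw [hb2, List.append_assoc]⟩

theorem mem_diag {x : GIS G} {q : G.DPath} (hx : x = GIS.pair q q rfl)
    (hq : q.IsSuffixOf d) : x ∈ cycleSet G p d :=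
  Or.inr ⟨q, hq, hx⟩

theorem zero_not_mem : (GIS.zero : GIS G) ∉ cycleSet G p d := by
  rintro (⟨r, s, v, a, b, h, hv, hxe, -⟩ | ⟨q, hq, hxe⟩) <;> exact nomatch hxe

theorem suffix_len_le {v u : G.DPath} (hv : v.IsSuffixOf u) :
    v.edges.length ≤ u.edges.length := by
  obtain ⟨l, hl, -⟩ := hv
  rw [hl, List.length_append]
  omega

/-- The empty path at the basepoint, as a suffix of the circuit `p`. -/
theorem empty_suffix (hp : G.IsCircuit p) :
    (⟨p.first, [], trivial⟩ : G.DPath).IsSuffixOf p :=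
  ⟨p.edges, by simp, hp.2.symm⟩

theorem mem_cases_pair (hp : G.IsCircuit p) {A B : G.DPath} {hAB : A.first = B.first}
    (hx : GIS.pair A B hAB ∈ cycleSet G p d) :
    (∃ (r s : ℕ) (v : G.DPath), v.IsSuffixOf p ∧ v.edges.length < p.edges.length ∧ A.first = v.first ∧
      A.edges = v.edges ++ (powEdges p r ++ d.edges) ∧
      B.edges = v.edges ++ (powEdges p s ++ d.edges)) ∨ (A = B ∧ A.IsSuffixOf d) := by
  rcases hx with ⟨r, s, v, a, b, h, hv, hxe, ha1, ha2, hb1, hb2⟩ | ⟨q, hq, hxe⟩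
  · obtain ⟨hA, hB⟩ := GIS.pair_inj hxe
    subst hA; subst hB
    have hvp : v.edges.length ≤ p.edges.length := suffix_len_le hv
    rcases lt_or_eq_of_le hvp with hlt | heq
    · exact Or.inl ⟨r, s, v, hv, hlt, ha1, by rw [ha2, List.append_assoc],
        by rw [hb2, List.append_assoc]⟩
    · obtain ⟨l, hl, hvf⟩ := hv
      have hl0 : l = [] := by
        have := congrArg List.length hl
        rw [List.length_append] at this
        have : l.length = 0 := by omega
        exact List.eq_nil_of_length_eq_zero this
      subst hl0
      rw [List.nil_append] at hl
      have hvf' : v.first = p.first := by simpa using hvf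
      refine Or.inl ⟨r + 1, s + 1, ⟨p.first, [], trivial⟩, empty_suffix hp,
        by simpa using List.length_pos_iff.mpr hp.1, by rw [ha1, hvf'], ?_, ?_⟩
      · rw [ha2, ← hl, powE_succ]; simp [List.append_assoc]
      · rw [hb2, ← hl, powE_succ]; simp [List.append_assoc]
  · obtain ⟨hA, hB⟩ := GIS.pair_inj hxe
    exact Or.inr ⟨hA.trans hB.symm, by rw [hA]; exact hq⟩

theorem inv_mem {x : GIS G} (hx : x ∈ cycleSet G p d) : x.inv ∈ cycleSet G p d := by
  rcases hx with ⟨r, s, v, a, b, h, hv, hxe, ha1, ha2, hb1, hb2⟩ | ⟨q, hq, hxe⟩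
  · subst hxe
    exact Or.inl ⟨s, r, v, b, a, h.symm, hv, rfl, hb1, hb2, ha1, ha2⟩
  · subst hxe
    exact Or.inr ⟨q, hq, rfl⟩

/-- The path `p^M d`. -/
def bigPa (p d : G.DPath) (hp2 : p.last = p.first) (hd : d.first = p.first) (M : ℕ) :
    G.DPath :=
  ⟨p.first, powEdges p M ++ d.edges, by
    rw [G.isWalk_append]
    refine ⟨isWalk_powE hp2 M, ?_⟩
    rw [walkEnd_powE hp2, ← hd]
    exact d.wf⟩

theorem big_suffix_succ (hp2 : p.last = p.first) (hd : d.first = p.first) (M : ℕ) :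
    (bigPa p d hp2 hd M).IsSuffixOf (bigPa p d hp2 hd (M + 1)) :=
  ⟨p.edges, by simp [bigPa, powE_succ, List.append_assoc], hp2.symm⟩

theorem big_mono (hp2 : p.last = p.first) (hd : d.first = p.first) {M N : ℕ} (h : M ≤ N) :
    (bigPa p d hp2 hd M).IsSuffixOf (bigPa p d hp2 hd N) := by
  induction N, h using Nat.le_induction with
  | base => exact DGraph.DPath.suffix_refl _
  | succ n hn ih => exact ih.trans' (big_suffix_succ hp2 hd n)

theorem cyc_comp_suffix_big (hp2 : p.last = p.first) (hd : d.first = p.first)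
    {X v : G.DPath} {r : ℕ} (hv : v.IsSuffixOf p) (hX1 : X.first = v.first)
    (hX2 : X.edges = v.edges ++ (powEdges p r ++ d.edges)) :
    X.IsSuffixOf (bigPa p d hp2 hd (r + 1)) := by
  obtain ⟨lv, hlv, hvv⟩ := hv
  refine ⟨lv, ?_, by show X.first = G.walkEnd p.first lv; rw [hX1, hvv]⟩
  show powEdges p (r + 1) ++ d.edges = lv ++ X.edges
  rw [powE_succ, hlv, hX2]
  simp [List.append_assoc]

theorem diag_comp_suffix_big (hp2 : p.last = p.first) (hd : d.first = p.first)
    {q : G.DPath} (hq : q.IsSuffixOf d) (M : ℕ) :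
    q.IsSuffixOf (bigPa p d hp2 hd M) := by
  obtain ⟨lq, hlq, hvq⟩ := hq
  refine ⟨powEdges p M ++ lq, ?_, ?_⟩
  · show powEdges p M ++ d.edges = (powEdges p M ++ lq) ++ q.edges
    rw [hlq]; simp [List.append_assoc]
  · show q.first = G.walkEnd (bigPa p d hp2 hd M).first (powEdges p M ++ lq)
    show q.first = G.walkEnd p.first (powEdges p M ++ lq)
    rw [walkEnd_append', walkEnd_powE hp2, ← hd]
    exact hvq

theorem comp_big (hp : G.IsCircuit p) (hd : d.first = p.first) {A B : G.DPath}
    {hAB : A.first = B.first} (hx : GIS.pair A B hAB ∈ cycleSet G p d) :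
    ∃ M, A.IsSuffixOf (bigPa p d hp.2 hd M) ∧ B.IsSuffixOf (bigPa p d hp.2 hd M) := by
  rcases hx with ⟨r, s, v, a, b, h, hv, hxe, ha1, ha2, hb1, hb2⟩ | ⟨q, hq, hxe⟩
  · obtain ⟨hA, hB⟩ := GIS.pair_inj hxe
    subst hA; subst hB
    refine ⟨max (r + 1) (s + 1), ?_, ?_⟩
    · exact (cyc_comp_suffix_big hp.2 hd hv ha1
        (by rw [ha2, List.append_assoc])).trans' (big_mono hp.2 hd (le_max_left _ _))
    · exact (cyc_comp_suffix_big hp.2 hd hv hb1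
        (by rw [hb2, List.append_assoc])).trans' (big_mono hp.2 hd (le_max_right _ _))
  · obtain ⟨hA, hB⟩ := GIS.pair_inj hxe
    subst hA; subst hB
    exact ⟨0, diag_comp_suffix_big hp.2 hd hq 0, diag_comp_suffix_big hp.2 hd hq 0⟩

theorem comp_tot (hp : G.IsCircuit p) (hd : d.first = p.first)
    {A B C F : G.DPath} {hAB : A.first = B.first} {hCF : C.first = F.first}
    (hx : GIS.pair A B hAB ∈ cycleSet G p d) (hy : GIS.pair C F hCF ∈ cycleSet G p d) :
    C.IsSuffixOf B ∨ B.IsSuffixOf C := by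
  obtain ⟨M1, -, hB⟩ := comp_big hp hd hx
  obtain ⟨M2, hC, -⟩ := comp_big hp hd hy
  exact DGraph.DPath.suffix_tot
    (hC.trans' (big_mono hp.2 hd (le_max_right M1 M2)))
    (hB.trans' (big_mono hp.2 hd (le_max_left M1 M2)))

section Res

variable {G : DGraph} {p d : G.DPath}

/-- The key product lemma: if `(A,B)` and `(C,F)` are in `L_{p,d}` and `C` is a suffix
of `B` via `l`, then `(A, l ++ F)` is in `L_{p,d}`. -/
theorem res (hp : G.IsCircuit p) (hd : d.first = p.first)
    {A B C F : G.DPath} {hAB : A.first = B.first} {hCF : C.first = F.first}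
    (hX : GIS.pair A B hAB ∈ cycleSet G p d) (hY : GIS.pair C F hCF ∈ cycleSet G p d)
    {l : List G.E} (hl : B.edges = l ++ C.edges) (hlv : C.first = G.walkEnd B.first l)
    {b : G.DPath} (hb1 : b.first = A.first) (hb2 : b.edges = l ++ F.edges)
    (h : A.first = b.first) :
    GIS.pair A b h ∈ cycleSet G p d := by
  have hLP : 0 < p.edges.length := List.length_pos_iff.mpr hp.1
  rcases mem_cases_pair hp hX with ⟨R, S, v, hv, hvlen, hA1, hA2, hB2⟩ | ⟨hABe, hAd⟩ <;>
    rcases mem_cases_pair hp hY with ⟨R', S', w, hw, hwlen, hC1, hC2, hF2⟩ | ⟨hCFe, hCd⟩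
  · -- cyc * cyc
    have key : v.edges ++ powEdges p S = (l ++ w.edges) ++ powEdges p R' := by
      apply List.append_cancel_right (bs := d.edges)
      have h' := hl
      rw [hB2, hC2] at h'
      simp only [List.append_assoc] at h' ⊢
      exact h'
    have hlen := congrArg List.length key
    simp only [List.length_append, length_powE] at hlen
    have hR'S : R' ≤ S := by
      by_contra hc
      push_neg at hc
      have h2 : S * p.edges.length + p.edges.length ≤ R' * p.edges.length := by
        have := Nat.mul_le_mul_right p.edges.length (by omega : S + 1 ≤ R')
        simpa [Nat.succ_mul] using this
      omega
    have key2 : l ++ w.edges = v.edges ++ powEdges p (S - R') := by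
      apply List.append_cancel_right (bs := powEdges p R')
      have hvs : v.edges ++ powEdges p (S - R' + R') =
          (v.edges ++ powEdges p (S - R')) ++ powEdges p R' := by
        rw [powE_add, List.append_assoc]
      rw [show S - R' + R' = S from by omega] at hvs
      rw [← hvs]
      exact key.symm
    refine mem_cyc rfl hv R (S - R' + S') hA1 hA2 (hb1.trans hA1) ?_
    rw [hb2, hF2, powE_add]
    rw [← List.append_assoc, key2]
    simp [List.append_assoc]
  · -- cyc * diag
    have hCFe' : C.edges = F.edges := by rw [hCFe]
    obtain ⟨lq, hlq, hvq⟩ := hCd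
    have key : l = v.edges ++ (powEdges p S ++ lq) := by
      apply List.append_cancel_right (bs := C.edges)
      rw [← hl, hB2, hlq]
      simp [List.append_assoc]
    refine mem_cyc rfl hv R S hA1 hA2 (hb1.trans hA1) ?_
    rw [hb2, ← hCFe', key, hlq]
    simp [List.append_assoc]
  · -- diag * cyc
    obtain ⟨la, hla, hva⟩ := hAd
    have hl0 : l = [] := by
      have h1 : A.edges.length ≤ d.edges.length := by rw [hla]; simp
      have h2 := congrArg List.length hl
      rw [← hABe] at h2
      rw [hC2] at h2
      simp only [List.length_append, length_powE] at h1 h2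
      have : l.length = 0 := by omega
      exact List.eq_nil_of_length_eq_zero this
    subst hl0
    rw [List.nil_append] at hl
    have hAfirst : A.first = C.first := by
      rw [hABe]
      exact (show C.first = B.first by simpa using hlv).symm
    refine mem_cyc rfl hw R' S' (by rw [hAfirst, hC1]) ?_ (hb1.trans (by rw [hAfirst, hC1])) ?_
    · rw [← hABe] at hl
      rw [hl, hC2]
    · rw [hb2, List.nil_append, hF2]
  · -- diag * diag
    have hCFe' : C.edges = F.edges := by rw [hCFe]
    refine mem_diag (q := A) ?_ hAd
    refine GIS.pair_congr rfl (DPath.ext' (show A.first = b.first from h) ?_).symm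
    show A.edges = b.edges
    rw [hb2, ← hCFe', ← hl, hABe]

theorem mem_shape {G : DGraph} {p d : G.DPath} {x : GIS G} (hx : x ∈ cycleSet G p d) :
    ∃ (A B : G.DPath) (hAB : A.first = B.first), x = GIS.pair A B hAB := by
  rcases hx with ⟨r, s, v, a, b, h, hv, hxe, -⟩ | ⟨q, hq, hxe⟩
  · exact ⟨a, b, h, hxe⟩
  · exact ⟨q, q, rfl, hxe⟩

theorem mul_mem {G : DGraph} {p d : G.DPath} (hp : G.IsCircuit p) (hd : d.first = p.first)
    {x y : GIS G} (hx : x ∈ cycleSet G p d) (hy : y ∈ cycleSet G p d) :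
    x * y ∈ cycleSet G p d := by
  obtain ⟨A, B, hAB, rfl⟩ := mem_shape hx
  obtain ⟨C, F, hCF, rfl⟩ := mem_shape hy
  by_cases hs : C.IsSuffixOf B
  · obtain ⟨bb, hbb, he, hbb1, hbb2⟩ := GIS.mul_eq₁ (h1 := hAB) (h2 := hCF) hs
    rw [he]
    obtain ⟨l, hl, hlv⟩ := hs
    exact res hp hd hx hy hl hlv hbb1 (by rw [hbb2, take_of_app hl]) hbb
  · have hs' : B.IsSuffixOf C := (comp_tot hp hd hx hy).resolve_left hs
    obtain ⟨aa, haa, he, haa1, haa2⟩ := GIS.mul_eq₂ (h1 := hAB) (h2 := hCF) hs hs'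
    rw [he]
    have hx' : GIS.pair B A hAB.symm ∈ cycleSet G p d := inv_mem hx
    have hy' : GIS.pair F C hCF.symm ∈ cycleSet G p d := inv_mem hy
    obtain ⟨l, hl, hlv⟩ := hs'
    have hres := res hp hd hy' hx' hl hlv
      (b := aa) (haa1.trans hCF) (by rw [haa2, take_of_app hl])
      ((haa1.trans hCF).symm)
    exact inv_mem hres

end Res

section Up

variable {G : DGraph} {p d : G.DPath}

theorem ncp_core (hpre : G.NoCommonPrefix p d) (hp1 : p.edges ≠ [])
    {z y : List G.E} (hz : z ≠ []) (h1 : z <+: d.edges) (h2 : z <+: p.edges ++ y) :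
    False := by
  rcases le_or_gt z.length p.edges.length with hle | hlt
  · apply hpre z hz ?_ h1
    obtain ⟨r, hr⟩ := h2
    have hzt : z = p.edges.take z.length := by
      have h3 : (z ++ r).take z.length = z := List.take_left (l₁ := z) (l₂ := r)
      rw [hr, List.take_append,
        show z.length - p.edges.length = 0 from by omega] at h3
      simpa using h3.symm
    rw [hzt]
    exact List.take_prefix _ _
  · have hpz : p.edges <+: z := by
      obtain ⟨r, hr⟩ := h2
      have h3 : (p.edges ++ y).take p.edges.length = p.edges := by
        rw [List.take_append, Nat.sub_self]
        simp
      rw [← hr, List.take_append,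
        show p.edges.length - z.length = 0 from by omega] at h3
      simp at h3
      rw [← h3]
      exact List.take_prefix _ _
    exact hpre p.edges hp1 (List.prefix_refl _) (hpz.trans h1)

theorem ncp_bound (hp : G.IsCircuit p) (hpre : G.NoCommonPrefix p d)
    {l z1 z2 : List G.E} {v : G.DPath} {R S : ℕ} (hRS : R < S)
    (h1 : v.edges ++ (powEdges p R ++ d.edges) = l ++ z1)
    (h2 : v.edges ++ (powEdges p S ++ d.edges) = l ++ z2) :
    l.length ≤ v.edges.length + R * p.edges.length := by
  by_contra hc
  push_neg at hc
  set n := v.edges.length + R * p.edges.length with hn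
  have hvn : v.edges.length ≤ n := by omega
  have e1 : d.edges = l.drop n ++ z1 := by
    have h3 := congrArg (List.drop n) h1
    rw [List.drop_append_of_le_length (le_of_lt hc)] at h3
    rw [drop_ge' hvn, show n - v.edges.length = R * p.edges.length from by omega,
      drop_powE R R le_rfl] at h3
    simpa [powE_zero] using h3
  have e2 : powEdges p (S - R) ++ d.edges = l.drop n ++ z2 := by
    have h3 := congrArg (List.drop n) h2
    rw [List.drop_append_of_le_length (le_of_lt hc)] at h3
    rw [drop_ge' hvn, show n - v.edges.length = R * p.edges.length from by omega,
      drop_powE R S (le_of_lt hRS)] at h3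
    exact h3
  have hzne : l.drop n ≠ [] := by
    intro hcon
    have h4 := congrArg List.length hcon
    rw [List.length_drop] at h4
    simp at h4
    omega
  obtain ⟨k, hk⟩ : ∃ k, S - R = k + 1 := ⟨S - R - 1, by omega⟩
  rw [hk, powE_succ, List.append_assoc] at e2
  exact ncp_core hpre hp.1 hzne ⟨z1, e1.symm⟩ ⟨z2, e2.symm⟩

theorem decomp (hp : G.IsCircuit p) {v : G.DPath} (hv : v.IsSuffixOf p) (j : ℕ) :
    ∃ (v' : G.DPath) (m : ℕ), v'.IsSuffixOf p ∧
      ∀ (S : ℕ) (x : List G.E), j ≤ v.edges.length + S * p.edges.length →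
        m ≤ S ∧ (v.edges ++ (powEdges p S ++ x)).drop j
              = v'.edges ++ (powEdges p (S - m) ++ x) := by
  have hLP : 0 < p.edges.length := List.length_pos_iff.mpr hp.1
  rcases le_or_gt j v.edges.length with hj | hj
  · refine ⟨⟨G.walkEnd v.first (v.edges.take j), v.edges.drop j, ?_⟩, 0, ?_, ?_⟩
    · have hw := v.wf
      rw [← List.take_append_drop j v.edges, G.isWalk_append] at hw
      exact hw.2
    · exact DGraph.DPath.IsSuffixOf.trans'
        ⟨v.edges.take j, (List.take_append_drop j v.edges).symm, rfl⟩ hv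
    · intro S x hS
      refine ⟨Nat.zero_le _, ?_⟩
      rw [List.drop_append_of_le_length hj]
      simp
  · have hct : p.edges.length * (  (j - v.edges.length) / p.edges.length) +
        (j - v.edges.length) % p.edges.length = j - v.edges.length :=
      Nat.div_add_mod _ _
    set i := j - v.edges.length with hi
    set c := i / p.edges.length with hc
    set t := i % p.edges.length with ht
    have hct' : c * p.edges.length + t = i := by rw [Nat.mul_comm]; exact hct
    have htLP : t < p.edges.length := Nat.mod_lt _ hLP
    by_cases ht0 : t = 0
    · refine ⟨⟨p.first, [], trivial⟩, c, empty_suffix hp, ?_⟩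
      intro S x hS
      have hiS : i ≤ S * p.edges.length := by omega
      have hcS : c ≤ S := by
        have hmul : c * p.edges.length ≤ S * p.edges.length := by omega
        exact Nat.le_of_mul_le_mul_right hmul hLP
      refine ⟨hcS, ?_⟩
      rw [drop_ge' (by omega : v.edges.length ≤ j), ← hi,
        show i = c * p.edges.length from by omega, drop_powE c S hcS]
      simp
    · refine ⟨⟨G.walkEnd p.first (p.edges.take t), p.edges.drop t, ?_⟩, c + 1,
        ⟨p.edges.take t, (List.take_append_drop t p.edges).symm, rfl⟩, ?_⟩
      · have hw := p.wf
        rw [← List.take_append_drop t p.edges, G.isWalk_append] at hw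
        exact hw.2
      intro S x hS
      have hiS : i ≤ S * p.edges.length := by omega
      have hcS : c + 1 ≤ S := by
        by_contra hcon
        push_neg at hcon
        have hmul : S * p.edges.length ≤ c * p.edges.length :=
          Nat.mul_le_mul_right _ (by omega)
        omega
      refine ⟨hcS, ?_⟩
      rw [drop_ge' (by omega : v.edges.length ≤ j), ← hi,
        show i = c * p.edges.length + t from by omega, ← List.drop_drop,
        drop_powE c S (by omega)]
      obtain ⟨k, hk⟩ : ∃ k, S - c = k + 1 := ⟨S - c - 1, by omega⟩
      rw [hk, powE_succ, List.append_assoc,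
        List.drop_append_of_le_length (le_of_lt htLP),
        show k = S - (c + 1) from by omega]

theorem first_match (hp : G.IsCircuit p) (hd : d.first = p.first) {v' : G.DPath}
    (hv' : v'.IsSuffixOf p) {X : G.DPath} {k : ℕ}
    (hX : X.edges = v'.edges ++ (powEdges p k ++ d.edges))
    (he : X.edges = [] → X.first = p.first) :
    X.first = v'.first := by
  obtain ⟨l, hl, hvv⟩ := hv'
  cases hve : v'.edges with
  | cons e tl =>
    have h1 : X.first = G.src e :=
      DGraph.DPath.first_of_cons (by rw [hX, hve, List.cons_append])
    have h2 : v'.first = G.src e := by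
      have hw := p.wf
      rw [hl, hve, G.isWalk_append, G.isWalk_cons] at hw
      rw [hvv, hw.2.1]
    rw [h1, h2]
  | nil =>
    rw [hve, List.append_nil] at hl
    have hv'f : v'.first = p.first := by rw [hvv, ← hl]; exact hp.2
    rw [hv'f]
    rw [hve, List.nil_append] at hX
    cases k with
    | succ k' =>
      rw [powE_succ, List.append_assoc] at hX
      obtain ⟨e, tl, hpe⟩ : ∃ e tl, p.edges = e :: tl := by
        cases hpe : p.edges with
        | nil => exact absurd hpe hp.1
        | cons e tl => exact ⟨e, tl, rfl⟩
      have h1 : X.first = G.src e :=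
        DGraph.DPath.first_of_cons (by rw [hX, hpe, List.cons_append])
      have h2 : p.first = G.src e := DGraph.DPath.first_of_cons hpe
      rw [h1, h2]
    | zero =>
      rw [show powEdges p 0 = [] from rfl, List.nil_append] at hX
      cases hde : d.edges with
      | cons e tl =>
        have h1 : X.first = G.src e :=
          DGraph.DPath.first_of_cons (by rw [hX, hde])
        have h2 : d.first = G.src e := DGraph.DPath.first_of_cons hde
        rw [h1, ← h2, hd]
      | nil => exact he (by rw [hX, hde])

theorem last_eq_dlast (hp : G.IsCircuit p) (hd : d.first = p.first) {q v : G.DPath} {R : ℕ}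
    (hv : v.IsSuffixOf p) (hq1 : q.first = v.first)
    (hq2 : q.edges = v.edges ++ (powEdges p R ++ d.edges)) : q.last = d.last := by
  show G.walkEnd q.first q.edges = G.walkEnd d.first d.edges
  rw [hq2, hq1, walkEnd_append', walkEnd_append']
  have hvl : G.walkEnd v.first v.edges = p.first := by
    have h3 := DGraph.DPath.suffix_last hv
    exact h3.trans hp.2
  rw [hvl, walkEnd_powE hp.2, ← hd]

theorem closed_up (hp : G.IsCircuit p) (hd : d.first = p.first)
    (hpre : G.NoCommonPrefix p d) {a s : GIS G} (ha : a ∈ cycleSet G p d)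
    (hle : GIS.le a s) : s ∈ cycleSet G p d := by
  have hLP : 0 < p.edges.length := List.length_pos_iff.mpr hp.1
  obtain ⟨e, hee, hes⟩ := hle
  cases e with
  | zero => rw [GIS.zero_mul'] at hes; exact absurd (hes ▸ ha) zero_not_mem
  | pair c1 c2 hcc =>
    have hc12 : c1 = c2 := GIS.idem_eq hee
    subst hc12
    cases s with
    | zero => rw [GIS.mul_zero'] at hes; exact absurd (hes ▸ ha) zero_not_mem
    | pair A' B' h' =>
      by_cases hs1 : A'.IsSuffixOf c1
      · obtain ⟨bb, hbb, he, hbb1, hbb2⟩ := GIS.mul_eq₁ (h1 := hcc) (h2 := h') hs1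
        rw [he] at hes
        obtain ⟨l, hl, hlv⟩ := hs1
        rw [take_of_app hl] at hbb2
        rw [hes] at ha
        rcases mem_cases_pair hp ha with ⟨R, S, v, hv, hvlen, hq1, hq2, hb2⟩ | ⟨hqe, hqd⟩
        · -- main case
          have eA : v.edges ++ (powEdges p R ++ d.edges) = l ++ A'.edges := by
            rw [← hq2, hl]
          have eB : v.edges ++ (powEdges p S ++ d.edges) = l ++ B'.edges := by
            rw [← hb2, hbb2]
          have hA'e : A'.edges = (v.edges ++ (powEdges p R ++ d.edges)).drop l.length := by
            rw [eA, List.drop_left]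
          have hB'e : B'.edges = (v.edges ++ (powEdges p S ++ d.edges)).drop l.length := by
            rw [eB, List.drop_left]
          have main : l.length ≤ v.edges.length + R * p.edges.length →
              l.length ≤ v.edges.length + S * p.edges.length →
              GIS.pair A' B' h' ∈ cycleSet G p d := by
            intro hbR hbS
            obtain ⟨v', m, hv', hprop⟩ := decomp hp hv l.length
            obtain ⟨hmR, hdropR⟩ := hprop R d.edges hbR
            obtain ⟨hmS, hdropS⟩ := hprop S d.edges hbS
            have hA'2 : A'.edges = v'.edges ++ (powEdges p (R - m) ++ d.edges) := by
              rw [hA'e, hdropR]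
            have hB'2 : B'.edges = v'.edges ++ (powEdges p (S - m) ++ d.edges) := by
              rw [hB'e, hdropS]
            have hA'f : A'.first = v'.first := by
              refine first_match hp hd hv' hA'2 ?_
              intro hnil
              have hld : l = c1.edges := by rw [hl, hnil, List.append_nil]
              have hdnil : d.edges = [] := by
                have h5 := hA'2
                rw [hnil] at h5
                have h6 := List.append_eq_nil_iff.mp h5.symm
                exact (List.append_eq_nil_iff.mp h6.2).2
              have h7 : A'.first = G.walkEnd c1.first c1.edges := by rw [hlv, hld]
              have h8 : c1.last = d.last := last_eq_dlast hp hd hv hq1 hq2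
              have h9 : d.last = p.first := by
                show G.walkEnd d.first d.edges = p.first
                rw [hdnil]
                exact hd
              exact h7.trans (h8.trans h9)
            exact mem_cyc rfl hv' (R - m) (S - m) hA'f hA'2 (h'.symm.trans hA'f) hB'2
          rcases Nat.lt_trichotomy R S with hRS | hRS | hRS
          · have hbR := ncp_bound hp hpre hRS eA eB
            refine main hbR ?_
            have hmul : R * p.edges.length ≤ S * p.edges.length :=
              Nat.mul_le_mul_right _ (le_of_lt hRS)
            omega
          · subst hRS
            by_cases hL : l.length ≤ v.edges.length + R * p.edges.length
            · exact main hL hL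
            · push_neg at hL
              have hA'B'e : A'.edges = B'.edges := by rw [hA'e, hB'e]
              have hA'B' : A' = B' := DPath.ext' h' hA'B'e
              have hsuf : A'.IsSuffixOf d := by
                have hdrop : A'.edges =
                    d.edges.drop (l.length - (v.edges.length + R * p.edges.length)) := by
                  rw [hA'e, drop_ge' (by omega : v.edges.length ≤ l.length),
                    drop_ge' (by rw [length_powE]; omega)]
                  congr 1
                  rw [length_powE]
                  omega
                refine isSuffixOf_of_edges
                  (d.edges.take (l.length - (v.edges.length + R * p.edges.length))) ?_ ?_
                · rw [hdrop, List.take_append_drop]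
                · intro hnil
                  have hld : l = c1.edges := by rw [hl, hnil, List.append_nil]
                  have h7 : A'.first = G.walkEnd c1.first c1.edges := by rw [hlv, hld]
                  exact h7.trans (last_eq_dlast hp hd hv hq1 hq2)
              exact mem_diag (GIS.pair_congr rfl hA'B'.symm) hsuf
          · have hbS := ncp_bound hp hpre hRS eB eA
            refine main ?_ hbS
            have hmul : S * p.edges.length ≤ R * p.edges.length :=
              Nat.mul_le_mul_right _ (le_of_lt hRS)
            omega
        · -- diag case
          have hA'B'e : A'.edges = B'.edges := by
            have h5 : l ++ A'.edges = l ++ B'.edges := by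
              rw [← hl, ← hbb2, hqe]
            exact List.append_cancel_left h5
          have hA'B' : A' = B' := DPath.ext' h' hA'B'e
          have hsufd : A'.IsSuffixOf d :=
            DGraph.DPath.IsSuffixOf.trans' ⟨l, hl, hlv⟩ hqd
          exact mem_diag (GIS.pair_congr rfl hA'B'.symm) hsufd
      · by_cases hs2 : c1.IsSuffixOf A'
        · obtain ⟨aa, haa, he, haa1, haa2⟩ := GIS.mul_eq₂ (h1 := hcc) (h2 := h') hs1 hs2
          rw [he] at hes
          obtain ⟨l, hl, hlv⟩ := hs2
          rw [take_of_app hl] at haa2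
          have haaA' : aa = A' := DPath.ext' haa1 (by rw [haa2, ← hl])
          rw [hes] at ha
          rwa [GIS.pair_congr haaA' rfl] at ha
        · rw [GIS.mul_eq₃ hs1 hs2] at hes
          exact absurd (hes ▸ ha) zero_not_mem

end Up

section Min

variable {G : DGraph} {p d : G.DPath}

theorem gen_pow (hp : G.IsCircuit p) (hd : d.first = p.first) {L : Set (GIS G)}
    (hL : IsCISS G L)
    (hg : GIS.pair d (G.concatPath p d (hd.trans hp.2.symm)) hd ∈ L) (k : ℕ) :
    GIS.pair (bigPa p d hp.2 hd 0) (bigPa p d hp.2 hd k) rfl ∈ L := by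
  obtain ⟨-, hmul, hinv, hup⟩ := hL
  induction k with
  | zero =>
    have h2 : GIS.pair (G.concatPath p d (hd.trans hp.2.symm)) d hd.symm ∈ L := hinv _ hg
    have h3 := hmul _ hg _ h2
    obtain ⟨bb, hbb, heq, hbb1, hbb2⟩ := GIS.mul_eq₁ (t := d)
      (u := G.concatPath p d (hd.trans hp.2.symm))
      (v := G.concatPath p d (hd.trans hp.2.symm)) (w := d) (h1 := hd) (h2 := hd.symm)
      (DGraph.DPath.suffix_refl (G.concatPath p d (hd.trans hp.2.symm)))
    rw [heq] at h3
    rw [take_of_app (show (G.concatPath p d (hd.trans hp.2.symm)).edges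
      = [] ++ (G.concatPath p d (hd.trans hp.2.symm)).edges by simp)] at hbb2
    have hcg : GIS.pair d bb hbb = GIS.pair (bigPa p d hp.2 hd 0) (bigPa p d hp.2 hd 0) rfl := by
      refine GIS.pair_congr (DPath.ext' hd ?_) (DPath.ext' (hbb1.trans hd) ?_)
      · show d.edges = powEdges p 0 ++ d.edges
        rw [powE_zero, List.nil_append]
      · show bb.edges = powEdges p 0 ++ d.edges
        rw [hbb2, powE_zero]
    rwa [hcg] at h3
  | succ k ih =>
    have hs : d.IsSuffixOf (bigPa p d hp.2 hd k) := by
      refine ⟨powEdges p k, rfl, ?_⟩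
      show d.first = G.walkEnd p.first (powEdges p k)
      rw [walkEnd_powE hp.2]
      exact hd
    obtain ⟨bb, hbb, heq, hbb1, hbb2⟩ := GIS.mul_eq₁ (t := bigPa p d hp.2 hd 0)
      (u := bigPa p d hp.2 hd k) (v := d) (w := G.concatPath p d (hd.trans hp.2.symm))
      (h1 := rfl) (h2 := hd) hs
    have h3 := hmul _ ih _ hg
    rw [heq] at h3
    rw [take_of_app (show (bigPa p d hp.2 hd k).edges
      = powEdges p k ++ d.edges from rfl)] at hbb2
    have hcg : GIS.pair (bigPa p d hp.2 hd 0) bb hbb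
        = GIS.pair (bigPa p d hp.2 hd 0) (bigPa p d hp.2 hd (k + 1)) rfl := by
      refine GIS.pair_congr rfl (DPath.ext' hbb1 ?_)
      show bb.edges = powEdges p (k + 1) ++ d.edges
      rw [hbb2, powE_succ_right]
      show _ = (powEdges p k ++ p.edges) ++ d.edges
      simp [List.append_assoc, DGraph.concatPath]
    rwa [hcg] at h3

theorem gen_mem (hp : G.IsCircuit p) (hd : d.first = p.first) :
    GIS.pair d (G.concatPath p d (hd.trans hp.2.symm)) hd ∈ cycleSet G p d := by
  refine mem_cyc rfl (empty_suffix hp) 0 1 hd ?_ rfl ?_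
  · show d.edges = [] ++ (powEdges p 0 ++ d.edges)
    rw [powE_zero]
    simp
  · show p.edges ++ d.edges = [] ++ (powEdges p 1 ++ d.edges)
    rw [powE_one]
    simp

theorem min_sub (hp : G.IsCircuit p) (hd : d.first = p.first) (L : Set (GIS G))
    (hL : IsCISS G L) (hg : GIS.pair d (G.concatPath p d (hd.trans hp.2.symm)) hd ∈ L) :
    cycleSet G p d ⊆ L := by
  intro x hx
  obtain ⟨-, hmul, hinv, hup⟩ := hL
  rcases hx with ⟨r, s, v, a, b, h, hv, hxe, ha1, ha2, hb1, hb2⟩ | ⟨q, hq, hxe⟩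
  · obtain ⟨lv, hlv, hvv⟩ := hv
    have h1 : GIS.pair (bigPa p d hp.2 hd 0) (bigPa p d hp.2 hd (r + 1)) rfl ∈ L :=
      gen_pow hp hd ⟨⟨_, hg⟩, hmul, hinv, hup⟩ hg (r + 1)
    have h1' : GIS.pair (bigPa p d hp.2 hd (r + 1)) (bigPa p d hp.2 hd 0) rfl ∈ L :=
      hinv _ h1
    have h2 : GIS.pair (bigPa p d hp.2 hd 0) (bigPa p d hp.2 hd (s + 1)) rfl ∈ L :=
      gen_pow hp hd ⟨⟨_, hg⟩, hmul, hinv, hup⟩ hg (s + 1)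
    have h3 := hmul _ h1' _ h2
    obtain ⟨bb, hbb, heq, hbb1, hbb2⟩ := GIS.mul_eq₁ (t := bigPa p d hp.2 hd (r + 1))
      (u := bigPa p d hp.2 hd 0) (v := bigPa p d hp.2 hd 0) (w := bigPa p d hp.2 hd (s + 1))
      (h1 := rfl) (h2 := rfl)
      (DGraph.DPath.suffix_refl (bigPa p d hp.2 hd 0))
    rw [heq] at h3
    rw [take_of_app (show (bigPa p d hp.2 hd 0).edges
      = [] ++ (bigPa p d hp.2 hd 0).edges by simp)] at hbb2
    have hxx : GIS.pair (bigPa p d hp.2 hd (r + 1)) bb hbb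
        = GIS.pair (bigPa p d hp.2 hd (r + 1)) (bigPa p d hp.2 hd (s + 1)) rfl := by
      refine GIS.pair_congr rfl (DPath.ext' hbb1 ?_)
      rw [hbb2, List.nil_append]
    rw [hxx] at h3
    have hle : GIS.le (GIS.pair (bigPa p d hp.2 hd (r + 1)) (bigPa p d hp.2 hd (s + 1)) rfl)
        (GIS.pair a b h) := by
      refine GIS.le_intro (a := bigPa p d hp.2 hd (r + 1)) (b := bigPa p d hp.2 hd (s + 1))
        rfl h lv ?_ ?_ ?_
      · show powEdges p (r + 1) ++ d.edges = lv ++ a.edges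
        rw [ha2, powE_succ, hlv]
        simp [List.append_assoc]
      · show powEdges p (s + 1) ++ d.edges = lv ++ b.edges
        rw [hb2, powE_succ, hlv]
        simp [List.append_assoc]
      · show a.first = G.walkEnd p.first lv
        rw [ha1, hvv]
    have h4 := hup _ h3 _ hle
    rwa [← hxe] at h4
  · obtain ⟨lq, hlq, hvq⟩ := hq
    have h1 : GIS.pair (bigPa p d hp.2 hd 0) (bigPa p d hp.2 hd 0) rfl ∈ L :=
      gen_pow hp hd ⟨⟨_, hg⟩, hmul, hinv, hup⟩ hg 0
    have hle : GIS.le (GIS.pair (bigPa p d hp.2 hd 0) (bigPa p d hp.2 hd 0) rfl)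
        (GIS.pair q q rfl) := by
      refine GIS.le_intro rfl rfl lq ?_ ?_ ?_
      · show powEdges p 0 ++ d.edges = lq ++ q.edges
        rw [powE_zero, List.nil_append, hlq]
      · show powEdges p 0 ++ d.edges = lq ++ q.edges
        rw [powE_zero, List.nil_append, hlq]
      · show q.first = G.walkEnd p.first lq
        rw [hvq, hd]
    have h4 := hup _ h1 _ hle
    rwa [← hxe] at h4

end Min

/-- `L_{p,d}` is the smallest closed inverse subsemigroup of `S(Γ)`
containing `(d, pd)`: it is a closed inverse subsemigroup containing `(d,pd)`, and
any closed inverse subsemigroup containing `(d,pd)` contains `L_{p,d}`. -/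
theorem stmt_5 (G : DGraph) [Fintype G.V] [Fintype G.E] (p d : G.DPath)
    (hp : G.IsCircuit p) (hd : d.first = p.first) (hpre : G.NoCommonPrefix p d) :
    IsCISS G (cycleSet G p d) ∧
    GIS.pair d (G.concatPath p d (hd.trans hp.2.symm)) hd ∈ cycleSet G p d ∧
    ∀ L : Set (GIS G), IsCISS G L →
      GIS.pair d (G.concatPath p d (hd.trans hp.2.symm)) hd ∈ L →
      cycleSet G p d ⊆ L := by
  refine ⟨⟨⟨GIS.pair d d rfl, mem_diag rfl (DGraph.DPath.suffix_refl d)⟩,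
    fun a ha b hb => mul_mem hp hd ha hb,
    fun a ha => inv_mem ha,
    fun a ha s hs => closed_up hp hd hpre ha hs⟩,
    gen_mem hp hd,
    fun L hL hg => min_sub hp hd L hL hg⟩
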